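/- Let m ≥ 1 be a natural number and θ ∈ ℝ. The second derivative at z = 0 of the θ-method stability function φ_θ(z) = (1 + θmz)/(1 − (1−θ)mz) equals 2(1−θ)m², and consequently φ_θ″(0) equals the second derivative m(m−1) of the m-step forward Euler stability function φ_m(z) = (1+z)^m at z = 0 if and only if θ = (m+1)/(2m). In particular θ_m = (m+1)/(2m) is the unique value of θ for which φ_θ approximates φ_m to second order at 0. -/

import Mathlib

lemma hasDerivAt_phi (a b x : ℝ) (hx : 1 - b * x ≠ 0) :
    HasDerivAt (fun z : ℝ => (1 + a * z) / (1 - b * z)) ((a + b) / (1 - b * x) ^ 2) x := by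
  have h1 : HasDerivAt (fun z : ℝ => 1 + a * z) a x := by
    simpa using ((hasDerivAt_id x).const_mul a).const_add 1
  have h2 : HasDerivAt (fun z : ℝ => 1 - b * z) (-b) x := by
    simpa using ((hasDerivAt_id x).const_mul b).const_sub 1
  have := h1.fun_div h2 hx
  convert! this using 1
  field_simp
  ring

lemma second_deriv_phi (a b : ℝ) :
    deriv (deriv (fun z : ℝ => (1 + a * z) / (1 - b * z))) 0 = 2 * b * (a + b) := by
  have hopen : IsOpen {x : ℝ | 1 - b * x ≠ 0} := isOpen_ne.preimage (by continuity)
  have h0 : (0:ℝ) ∈ {x : ℝ | 1 - b * x ≠ 0} := by simp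
  have hev : deriv (fun z : ℝ => (1 + a * z) / (1 - b * z)) =ᶠ[nhds (0:ℝ)]
      fun z : ℝ => (a + b) * ((1 - b * z) ^ 2)⁻¹ := by
    filter_upwards [hopen.mem_nhds h0] with x hx
    rw [(hasDerivAt_phi a b x hx).deriv, div_eq_mul_inv]
  rw [hev.deriv_eq]
  have h1 : HasDerivAt (fun z : ℝ => 1 - b * z) (-b) 0 := by
    simpa using ((hasDerivAt_id (0:ℝ)).const_mul b).const_sub 1
  have h2 : HasDerivAt (fun z : ℝ => (1 - b * z) ^ 2) (2 * (1 - b * 0) ^ 1 * (-b)) 0 := by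
    simpa using h1.fun_pow 2
  have hne : ((1 : ℝ) - b * 0) ^ 2 ≠ 0 := by norm_num
  have h3 := ((h2.fun_inv hne).const_mul (a + b)).deriv
  rw [h3]
  norm_num
  ring

lemma second_deriv_pow (m : ℕ) (hm : 1 ≤ m) :
    deriv (deriv (fun z : ℝ => (1 + z) ^ m)) 0 = (m : ℝ) * ((m : ℝ) - 1) := by
  have hd : deriv (fun z : ℝ => (1 + z) ^ m) =
      fun x : ℝ => (m : ℝ) * (1 + x) ^ (m - 1) := by
    funext x
    have h1 : HasDerivAt (fun z : ℝ => 1 + z) 1 x := by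
      simpa using (hasDerivAt_id x).const_add 1
    have := h1.fun_pow m
    simpa using this.deriv
  rw [hd]
  have h1 : HasDerivAt (fun z : ℝ => 1 + z) 1 (0:ℝ) := by
    simpa using (hasDerivAt_id (0:ℝ)).const_add 1
  have h2 := (h1.fun_pow (m-1)).const_mul (m : ℝ)
  rw [h2.deriv]
  have : ((m - 1 : ℕ) : ℝ) = (m : ℝ) - 1 := by
    rw [Nat.cast_sub hm]; norm_num
  simp [this]


/-- The second derivative at `0` of the θ-method stability function
`φ_θ(z) = (1 + θmz)/(1 − (1−θ)mz)` equals `2(1−θ)m²`; the second derivative at `0`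
of the `m`-step forward Euler stability function `φ_m(z) = (1+z)^m` equals `m(m−1)`;
and the two agree if and only if `θ = (m+1)/(2m)`. -/
theorem theta_method_second_derivative (m : ℕ) (hm : 1 ≤ m) (θ : ℝ) :
    deriv (deriv (fun z : ℝ => (1 + θ * m * z) / (1 - (1 - θ) * m * z))) 0
      = 2 * (1 - θ) * (m : ℝ) ^ 2 ∧
    deriv (deriv (fun z : ℝ => (1 + z) ^ m)) 0 = (m : ℝ) * ((m : ℝ) - 1) ∧
    (deriv (deriv (fun z : ℝ => (1 + θ * m * z) / (1 - (1 - θ) * m * z))) 0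
        = deriv (deriv (fun z : ℝ => (1 + z) ^ m)) 0
      ↔ θ = ((m : ℝ) + 1) / (2 * m)) := by
  have hA : deriv (deriv (fun z : ℝ => (1 + θ * m * z) / (1 - (1 - θ) * m * z))) 0
      = 2 * (1 - θ) * (m : ℝ) ^ 2 := by
    rw [second_deriv_phi (θ * m) ((1 - θ) * m)]
    ring
  have hB := second_deriv_pow m hm
  have hmpos : (0:ℝ) < m := by exact_mod_cast hm
  refine ⟨hA, hB, ?_⟩
  rw [hA, hB, eq_div_iff (by positivity)]
  constructor <;> intro h <;> nlinarith [hmpos]
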